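/- Let R be a reduced root system in ℝ^N with positive subsystem R₊, and suppose all multiplicities equal 1, so that w_β(x) = ∏_{α∈R₊} |α·x|^β for β > 0. Then for every x in the complement of the union of the hyperplanes {α·x = 0}, the Euclidean Laplacian of w_β satisfies Δ w_β(x) = β(β−1) w_β(x) · ∑_{α∈R₊} ‖α‖²/(α·x)². -/

import Mathlib

open RealInnerProductSpace Finset

noncomputable section DunklAux

variable {N : ℕ}

/-- Reflection along `η`. -/
def dwRefl (η y : EuclideanSpace ℝ (Fin N)) : EuclideanSpace ℝ (Fin N) :=
  y - (2 * ⟪η, y⟫ / ‖η‖ ^ 2) • η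

lemma dwRefl_adjoint (η u v : EuclideanSpace ℝ (Fin N)) :
    ⟪dwRefl η u, v⟫ = ⟪u, dwRefl η v⟫ := by
  simp only [dwRefl, inner_sub_left, inner_sub_right, real_inner_smul_left,
    real_inner_smul_right]
  rw [real_inner_comm u η]
  ring

lemma dwRefl_neg (η y : EuclideanSpace ℝ (Fin N)) : dwRefl η (-y) = -dwRefl η y := by
  simp only [dwRefl, inner_neg_right]
  module

lemma dwRefl_refl {η : EuclideanSpace ℝ (Fin N)} (hη : η ≠ 0)
    (y : EuclideanSpace ℝ (Fin N)) : dwRefl η (dwRefl η y) = y := by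
  have hn : ‖η‖ ^ 2 ≠ 0 := pow_ne_zero _ (norm_ne_zero_iff.mpr hη)
  simp only [dwRefl, inner_sub_right, real_inner_smul_right, real_inner_self_eq_norm_sq]
  match_scalars
  · ring
  · field_simp
    ring

lemma dwRefl_inner_inner {η : EuclideanSpace ℝ (Fin N)} (hη : η ≠ 0)
    (u v : EuclideanSpace ℝ (Fin N)) : ⟪dwRefl η u, dwRefl η v⟫ = ⟪u, v⟫ := by
  rw [dwRefl_adjoint, dwRefl_refl hη]

lemma dwRefl_self {η : EuclideanSpace ℝ (Fin N)} (hη : η ≠ 0) : dwRefl η η = -η := by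
  have hn : ‖η‖ ^ 2 ≠ 0 := pow_ne_zero _ (norm_ne_zero_iff.mpr hη)
  simp only [dwRefl, real_inner_self_eq_norm_sq]
  match_scalars
  field_simp
  ring

lemma dwRefl_fixed {η y : EuclideanSpace ℝ (Fin N)} (h : ⟪η, y⟫ = 0) : dwRefl η y = y := by
  simp [dwRefl, h]


open scoped Classical in
/-- The positive-root representative of the reflection of `μ`. -/
def dwPerm (Rplus : Finset (EuclideanSpace ℝ (Fin N))) (η μ : EuclideanSpace ℝ (Fin N)) :
    EuclideanSpace ℝ (Fin N) :=
  if dwRefl η μ ∈ Rplus then dwRefl η μ else -dwRefl η μ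

open scoped Classical in
/-- The sign of the reflection of `μ`. -/
def dwSign (Rplus : Finset (EuclideanSpace ℝ (Fin N))) (η μ : EuclideanSpace ℝ (Fin N)) : ℝ :=
  if dwRefl η μ ∈ Rplus then 1 else -1

lemma dwSign_mul_self {Rplus : Finset (EuclideanSpace ℝ (Fin N))}
    {η μ : EuclideanSpace ℝ (Fin N)} : dwSign Rplus η μ * dwSign Rplus η μ = 1 := by
  unfold dwSign; split_ifs <;> norm_num

lemma dwRefl_eq_sign_smul {Rplus : Finset (EuclideanSpace ℝ (Fin N))}
    {η μ : EuclideanSpace ℝ (Fin N)} :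
    dwRefl η μ = dwSign Rplus η μ • dwPerm Rplus η μ := by
  unfold dwPerm dwSign; split_ifs <;> simp

lemma inner_dwPerm {Rplus : Finset (EuclideanSpace ℝ (Fin N))}
    {η μ : EuclideanSpace ℝ (Fin N)} (y : EuclideanSpace ℝ (Fin N)) :
    ⟪dwRefl η μ, y⟫ = dwSign Rplus η μ * ⟪dwPerm Rplus η μ, y⟫ := by
  rw [dwRefl_eq_sign_smul (Rplus := Rplus), real_inner_smul_left]

/-- Bundled hypotheses on the root system. -/
structure DWSetup (N : ℕ) (R Rplus : Finset (EuclideanSpace ℝ (Fin N)))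
    (m : EuclideanSpace ℝ (Fin N)) : Prop where
  hR0 : (0 : EuclideanSpace ℝ (Fin N)) ∉ R
  hRinv : ∀ α ∈ R, ∀ ξ ∈ R, (ξ - (2 * ⟪α, ξ⟫ / ‖α‖ ^ 2) • α) ∈ R
  hRred : ∀ α ∈ R, ∀ c : ℝ, c • α ∈ R → c = 1 ∨ c = -1
  hm : ∀ α ∈ R, ⟪m, α⟫ ≠ 0
  hRplus : Rplus = R.filter (fun α => 0 < ⟪m, α⟫)

namespace DWSetup

variable {R Rplus : Finset (EuclideanSpace ℝ (Fin N))} {m : EuclideanSpace ℝ (Fin N)}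
variable (h : DWSetup N R Rplus m)

include h

lemma subset : Rplus ⊆ R := by
  rw [h.hRplus]; exact Finset.filter_subset _ _

lemma ne_zero {α} (hα : α ∈ R) : α ≠ 0 := fun h0 => h.hR0 (h0 ▸ hα)

lemma ne_zero' {α} (hα : α ∈ Rplus) : α ≠ 0 := h.ne_zero (h.subset hα)

lemma refl_mem {η μ} (hη : η ∈ R) (hμ : μ ∈ R) : dwRefl η μ ∈ R :=
  h.hRinv η hη μ hμ

lemma neg_mem {α} (hα : α ∈ R) : -α ∈ R := by
  have := h.refl_mem hα hα
  rwa [dwRefl_self (h.ne_zero hα)] at this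

lemma pos {α} (hα : α ∈ Rplus) : 0 < ⟪m, α⟫ := by
  rw [h.hRplus] at hα; exact (Finset.mem_filter.mp hα).2

lemma not_neg {α} (hα : α ∈ Rplus) : -α ∉ Rplus := by
  intro hn
  have h1 := h.pos hα
  have h2 := h.pos hn
  rw [inner_neg_right] at h2
  linarith

lemma cover {α} (hα : α ∈ R) : α ∈ Rplus ∨ -α ∈ Rplus := by
  rcases lt_or_gt_of_ne (h.hm α hα) with hlt | hgt
  · right
    rw [h.hRplus]
    exact Finset.mem_filter.mpr ⟨h.neg_mem hα, by rw [inner_neg_right]; linarith⟩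
  · left
    rw [h.hRplus]
    exact Finset.mem_filter.mpr ⟨hα, hgt⟩

lemma prop_eq {μ η : EuclideanSpace ℝ (Fin N)} {c : ℝ} (hμ : μ ∈ Rplus) (hη : η ∈ Rplus)
    (hc : μ = c • η) : μ = η := by
  rcases h.hRred η (h.subset hη) c (hc ▸ h.subset hμ) with rfl | rfl
  · simpa using hc
  · exfalso
    apply h.not_neg hη
    have : -η = μ := by rw [hc]; module
    rwa [this]

lemma refl_eq_neg {μ η : EuclideanSpace ℝ (Fin N)} (hμ : μ ∈ Rplus) (hη : η ∈ Rplus)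
    (he : dwRefl η μ = -μ) : μ = η := by
  have ht : μ - (2 * ⟪η, μ⟫ / ‖η‖ ^ 2) • η = -μ := he
  have h2 : μ = (2⁻¹ * (2 * ⟪η, μ⟫ / ‖η‖ ^ 2)) • η := by
    rw [mul_smul]
    linear_combination (norm := module) (2⁻¹ : ℝ) • ht
  exact h.prop_eq hμ hη h2


lemma perm_mem {η μ} (hη : η ∈ Rplus) (hμ : μ ∈ Rplus) : dwPerm Rplus η μ ∈ Rplus := by
  unfold dwPerm; split_ifs with hc
  · exact hc
  · rcases h.cover (h.refl_mem (h.subset hη) (h.subset hμ)) with h1 | h1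
    · exact absurd h1 hc
    · exact h1

lemma perm_perm {η μ} (hη : η ∈ Rplus) (hμ : μ ∈ Rplus) :
    dwPerm Rplus η (dwPerm Rplus η μ) = μ := by
  have hη0 : η ≠ 0 := h.ne_zero' hη
  by_cases hc : dwRefl η μ ∈ Rplus
  · simp [dwPerm, hc, dwRefl_refl hη0, hμ]
  · have h1 : dwPerm Rplus η μ = -dwRefl η μ := by unfold dwPerm; rw [if_neg hc]
    rw [h1]
    unfold dwPerm
    rw [dwRefl_neg, dwRefl_refl hη0, if_neg (h.not_neg hμ), neg_neg]

lemma sign_perm {η μ} (hη : η ∈ Rplus) (hμ : μ ∈ Rplus) :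
    dwSign Rplus η (dwPerm Rplus η μ) = dwSign Rplus η μ := by
  have hη0 : η ≠ 0 := h.ne_zero' hη
  by_cases hc : dwRefl η μ ∈ Rplus
  · simp [dwPerm, dwSign, hc, dwRefl_refl hη0, hμ]
  · simp [dwPerm, dwSign, hc, dwRefl_neg, dwRefl_refl hη0, h.not_neg hμ]

lemma perm_self {η} (hη : η ∈ Rplus) : dwPerm Rplus η η = η := by
  simp [dwPerm, dwRefl_self (h.ne_zero' hη), h.not_neg hη]

lemma sign_self {η} (hη : η ∈ Rplus) : dwSign Rplus η η = -1 := by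
  simp [dwSign, dwRefl_self (h.ne_zero' hη), h.not_neg hη]

lemma perm_inj {η μ ν} (hη : η ∈ Rplus) (hμ : μ ∈ Rplus) (hν : ν ∈ Rplus)
    (he : dwPerm Rplus η μ = dwPerm Rplus η ν) : μ = ν := by
  have := congrArg (dwPerm Rplus η) he
  rwa [h.perm_perm hη hμ, h.perm_perm hη hν] at this

lemma sign_prod {η} (hη : η ∈ Rplus) : ∏ μ ∈ Rplus, dwSign Rplus η μ = -1 := by
  classical
  rw [← Finset.prod_erase_mul Rplus _ hη, h.sign_self hη]
  have h1 : ∏ μ ∈ Rplus.erase η, dwSign Rplus η μ = 1 := by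
    apply Finset.prod_involution (g := fun a _ => dwPerm Rplus η a)
    · intro a ha
      rw [h.sign_perm hη (Finset.mem_of_mem_erase ha)]
      exact dwSign_mul_self
    · intro a ha hne heq
      by_cases hc : dwRefl η a ∈ Rplus
      · exact hne (by simp [dwSign, hc])
      · simp only [dwPerm, if_neg hc] at heq
        have h3 : dwRefl η a = -a := neg_eq_iff_eq_neg.mp heq
        exact (Finset.ne_of_mem_erase ha) (h.refl_eq_neg (Finset.mem_of_mem_erase ha) hη h3)
    · intro a ha
      refine Finset.mem_erase.mpr ⟨?_, h.perm_mem hη (Finset.mem_of_mem_erase ha)⟩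
      intro he'
      apply Finset.ne_of_mem_erase ha
      have := congrArg (dwPerm Rplus η) he'
      rwa [h.perm_perm hη (Finset.mem_of_mem_erase ha), h.perm_self hη] at this
    · intro a ha
      exact h.perm_perm hη (Finset.mem_of_mem_erase ha)
  rw [h1, one_mul]

lemma inner_eq_sign {η α ξ} (hη : η ∈ Rplus) :
    ⟪α, ξ⟫ = dwSign Rplus η α * dwSign Rplus η ξ *
      ⟪dwPerm Rplus η α, dwPerm Rplus η ξ⟫ := by
  conv_lhs => rw [← dwRefl_inner_inner (h.ne_zero' hη) α ξ]
  rw [dwRefl_eq_sign_smul (Rplus := Rplus) (μ := α),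
    dwRefl_eq_sign_smul (Rplus := Rplus) (μ := ξ), real_inner_smul_left,
    real_inner_smul_right]
  ring

end DWSetup


variable [DecidableEq (EuclideanSpace ℝ (Fin N))]

/-- The numerator polynomial function of the cross-term sum. -/
def dwP (Rplus : Finset (EuclideanSpace ℝ (Fin N))) (y : EuclideanSpace ℝ (Fin N)) : ℝ :=
  ∑ α ∈ Rplus, ∑ ξ ∈ Rplus.erase α,
    ⟪α, ξ⟫ * ∏ μ ∈ (Rplus.erase α).erase ξ, ⟪μ, y⟫

namespace DWSetup

variable {R Rplus : Finset (EuclideanSpace ℝ (Fin N))} {m : EuclideanSpace ℝ (Fin N)}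
variable (h : DWSetup N R Rplus m)

include h

lemma dwP_refl {η} (hη : η ∈ Rplus) (y : EuclideanSpace ℝ (Fin N)) :
    dwP Rplus (dwRefl η y) = -dwP Rplus y := by
  set p := dwPerm Rplus η with hp
  set e := dwSign Rplus η with he
  have hmemTT : ∀ {α ξ μ : EuclideanSpace ℝ (Fin N)}, α ∈ Rplus → ξ ∈ Rplus.erase α →
      μ ∈ (Rplus.erase α).erase ξ → μ ∈ Rplus := fun hα hξe hμ =>
    Finset.mem_of_mem_erase (Finset.mem_of_mem_erase hμ)
  have key : ∀ α ∈ Rplus, ∀ ξ ∈ Rplus.erase α,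
      ⟪α, ξ⟫ * ∏ μ ∈ (Rplus.erase α).erase ξ, ⟪μ, dwRefl η y⟫
        = -(⟪p α, p ξ⟫ * ∏ μ ∈ (Rplus.erase (p α)).erase (p ξ), ⟪μ, y⟫) := by
    intro α hα ξ hξe
    have hξ : ξ ∈ Rplus := Finset.mem_of_mem_erase hξe
    have hne : ξ ≠ α := Finset.ne_of_mem_erase hξe
    have h1 : ∏ μ ∈ (Rplus.erase α).erase ξ, ⟪μ, dwRefl η y⟫
        = (∏ μ ∈ (Rplus.erase α).erase ξ, e μ) *
          ∏ μ ∈ (Rplus.erase α).erase ξ, ⟪p μ, y⟫ := by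
      rw [← Finset.prod_mul_distrib]
      refine Finset.prod_congr rfl fun μ hμ => ?_
      rw [← dwRefl_adjoint, inner_dwPerm (Rplus := Rplus)]
    have ha2 : e α * e α = 1 := dwSign_mul_self
    have hb2 : e ξ * e ξ = 1 := dwSign_mul_self
    have h2 : (∏ μ ∈ (Rplus.erase α).erase ξ, e μ) = -(e α * e ξ) := by
      have key2 : e α * (e ξ * ∏ μ ∈ (Rplus.erase α).erase ξ, e μ) = -1 := by
        rw [Finset.mul_prod_erase (Rplus.erase α) e hξe, Finset.mul_prod_erase Rplus e hα]
        exact h.sign_prod hη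
      calc (∏ μ ∈ (Rplus.erase α).erase ξ, e μ)
          = (e α * e α) * ((e ξ * e ξ) * ∏ μ ∈ (Rplus.erase α).erase ξ, e μ) := by
            rw [ha2, hb2]; ring
        _ = (e α * (e ξ * ∏ μ ∈ (Rplus.erase α).erase ξ, e μ)) * (e α * e ξ) := by ring
        _ = -1 * (e α * e ξ) := by rw [key2]
        _ = -(e α * e ξ) := by ring
    have h3 : ⟪α, ξ⟫ = e α * e ξ * ⟪p α, p ξ⟫ := h.inner_eq_sign hη
    have h4 : ∏ μ ∈ (Rplus.erase α).erase ξ, ⟪p μ, y⟫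
        = ∏ μ ∈ (Rplus.erase (p α)).erase (p ξ), ⟪μ, y⟫ := by
      refine Finset.prod_nbij' p p ?_ ?_ ?_ ?_ ?_
      · intro a ha
        have haR : a ∈ Rplus := hmemTT hα hξe ha
        have ha1 : a ≠ ξ := Finset.ne_of_mem_erase ha
        have ha2' : a ≠ α := Finset.ne_of_mem_erase (Finset.mem_of_mem_erase ha)
        refine Finset.mem_erase.mpr ⟨?_, Finset.mem_erase.mpr ⟨?_, h.perm_mem hη haR⟩⟩
        · exact fun hc => ha1 (h.perm_inj hη haR hξ hc)
        · exact fun hc => ha2' (h.perm_inj hη haR hα hc)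
      · intro a ha
        have haR : a ∈ Rplus := Finset.mem_of_mem_erase (Finset.mem_of_mem_erase ha)
        have ha1 : a ≠ p ξ := Finset.ne_of_mem_erase ha
        have ha2' : a ≠ p α := Finset.ne_of_mem_erase (Finset.mem_of_mem_erase ha)
        refine Finset.mem_erase.mpr ⟨?_, Finset.mem_erase.mpr ⟨?_, h.perm_mem hη haR⟩⟩
        · intro hc
          exact ha1 (by rw [← hc]; exact (h.perm_perm hη haR).symm)
        · intro hc
          exact ha2' (by rw [← hc]; exact (h.perm_perm hη haR).symm)
      · intro a ha
        exact h.perm_perm hη (hmemTT hα hξe ha)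
      · intro a ha
        exact h.perm_perm hη (Finset.mem_of_mem_erase (Finset.mem_of_mem_erase ha))
      · intro a ha
        rfl
    rw [h1, h2, h3, h4]
    have hring : (e α * e ξ * ⟪p α, p ξ⟫) *
        (-(e α * e ξ) * ∏ μ ∈ (Rplus.erase (p α)).erase (p ξ), ⟪μ, y⟫)
        = -((e α * e α) * (e ξ * e ξ) *
          (⟪p α, p ξ⟫ * ∏ μ ∈ (Rplus.erase (p α)).erase (p ξ), ⟪μ, y⟫)) := by ring
    rw [hring, ha2, hb2]
    ring
  calc dwP Rplus (dwRefl η y)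
      = ∑ α ∈ Rplus, ∑ ξ ∈ Rplus.erase α,
          -(⟪p α, p ξ⟫ * ∏ μ ∈ (Rplus.erase (p α)).erase (p ξ), ⟪μ, y⟫) := by
        unfold dwP
        exact Finset.sum_congr rfl fun α hα => Finset.sum_congr rfl fun ξ hξ => key α hα ξ hξ
    _ = -∑ α ∈ Rplus, ∑ ξ ∈ Rplus.erase α,
          ⟪p α, p ξ⟫ * ∏ μ ∈ (Rplus.erase (p α)).erase (p ξ), ⟪μ, y⟫ := by
        simp [Finset.sum_neg_distrib]
    _ = -∑ α ∈ Rplus, ∑ ξ ∈ Rplus.erase (p α),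
          ⟪p α, ξ⟫ * ∏ μ ∈ (Rplus.erase (p α)).erase ξ, ⟪μ, y⟫ := by
        congr 1
        refine Finset.sum_congr rfl fun α hα => ?_
        refine Finset.sum_nbij' p p ?_ ?_ ?_ ?_ ?_
        · intro a ha
          refine Finset.mem_erase.mpr ⟨?_, h.perm_mem hη (Finset.mem_of_mem_erase ha)⟩
          exact fun hc =>
            Finset.ne_of_mem_erase ha (h.perm_inj hη (Finset.mem_of_mem_erase ha) hα hc)
        · intro a ha
          refine Finset.mem_erase.mpr ⟨?_, h.perm_mem hη (Finset.mem_of_mem_erase ha)⟩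
          intro hc
          exact Finset.ne_of_mem_erase ha
            (by rw [← hc]; exact (h.perm_perm hη (Finset.mem_of_mem_erase ha)).symm)
        · intro a ha
          exact h.perm_perm hη (Finset.mem_of_mem_erase ha)
        · intro a ha
          exact h.perm_perm hη (Finset.mem_of_mem_erase ha)
        · intro a ha
          rfl
    _ = -∑ α ∈ Rplus, ∑ ξ ∈ Rplus.erase α,
          ⟪α, ξ⟫ * ∏ μ ∈ (Rplus.erase α).erase ξ, ⟪μ, y⟫ := by
        congr 1
        refine Finset.sum_nbij' p p ?_ ?_ ?_ ?_ ?_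
        · intro a ha
          exact h.perm_mem hη ha
        · intro a ha
          exact h.perm_mem hη ha
        · intro a ha
          exact h.perm_perm hη ha
        · intro a ha
          exact h.perm_perm hη ha
        · intro a ha
          rfl
    _ = -dwP Rplus y := rfl

lemma dwP_hyperplane {η y} (hη : η ∈ Rplus) (hy : ⟪η, y⟫ = 0) : dwP Rplus y = 0 := by
  have h1 := h.dwP_refl hη y
  rw [dwRefl_fixed hy] at h1
  linarith

end DWSetup


/-- A vector not orthogonal to any member of a finite set of nonzero vectors. -/
lemma dw_exists_generic :
    ∀ S : Finset (EuclideanSpace ℝ (Fin N)), (∀ u ∈ S, u ≠ 0) →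
      ∃ v : EuclideanSpace ℝ (Fin N), ∀ u ∈ S, ⟪u, v⟫ ≠ 0 := by
  classical
  intro S
  induction S using Finset.induction_on with
  | empty => exact fun _ => ⟨0, fun u hu => absurd hu (Finset.notMem_empty u)⟩
  | @insert a s ha ih =>
    intro hS
    obtain ⟨v, hv⟩ := ih fun u hu => hS u (Finset.mem_insert_of_mem hu)
    have ha0 : a ≠ 0 := hS a (Finset.mem_insert_self a s)
    set B : Finset ℝ := (insert a s).image fun u => -⟪u, v⟫ / ⟪u, a⟫ with hB
    obtain ⟨c, hc⟩ := Infinite.exists_notMem_finset B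
    refine ⟨v + c • a, fun u hu hcontra => ?_⟩
    have hinner : ⟪u, v⟫ + c * ⟪u, a⟫ = 0 := by
      rw [inner_add_right, real_inner_smul_right] at hcontra
      linarith [hcontra]
    by_cases hua : ⟪u, a⟫ = 0
    · rcases Finset.mem_insert.mp hu with rfl | hus
      · exact (inner_self_ne_zero.mpr ha0) hua
      · exact hv u hus (by rw [hua, mul_zero, add_zero] at hinner; exact hinner)
    · apply hc
      refine Finset.mem_image.mpr ⟨u, hu, ?_⟩
      rw [div_eq_iff hua]
      linarith

namespace DWSetup

variable {R Rplus : Finset (EuclideanSpace ℝ (Fin N))} {m : EuclideanSpace ℝ (Fin N)}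
variable (h : DWSetup N R Rplus m)

include h

lemma dwP_eq_zero (x : EuclideanSpace ℝ (Fin N)) (hx : ∀ α ∈ R, ⟪α, x⟫ ≠ 0) :
    dwP Rplus x = 0 := by
  classical
  by_cases hcard : Rplus.card < 2
  · unfold dwP
    refine Finset.sum_eq_zero fun α hα => ?_
    have : Rplus.erase α = ∅ := by
      apply Finset.eq_empty_of_forall_notMem
      intro ξ hξ
      have h1 : 1 ≤ (Rplus.erase α).card := Finset.card_pos.mpr ⟨ξ, hξ⟩
      have h2 := Finset.card_erase_of_mem hα
      omega
    rw [this, Finset.sum_empty]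
  push_neg at hcard
  -- the finite set of vectors that `v` must avoid being orthogonal to
  set S : Finset (EuclideanSpace ℝ (Fin N)) :=
    Rplus ∪ ((Rplus ×ˢ Rplus).filter fun q => q.1 ≠ q.2).image
      (fun q => ⟪q.1, x⟫ • q.2 - ⟪q.2, x⟫ • q.1) with hS
  have hS0 : ∀ u ∈ S, u ≠ 0 := by
    intro u hu
    rcases Finset.mem_union.mp hu with h1 | h1
    · exact h.ne_zero' h1
    · obtain ⟨⟨a, b⟩, hab, rfl⟩ := Finset.mem_image.mp h1
      obtain ⟨hmem, hne⟩ := Finset.mem_filter.mp hab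
      obtain ⟨haP, hbP⟩ := Finset.mem_product.mp hmem
      intro hzero
      have hax : ⟪a, x⟫ ≠ 0 := hx a (h.subset haP)
      have hb : b = (⟪b, x⟫ / ⟪a, x⟫) • a := by
        have h2 : ⟪a, x⟫ • b = ⟪b, x⟫ • a := by
          have := sub_eq_zero.mp hzero
          exact this
        have := congrArg (fun z => (⟪a, x⟫)⁻¹ • z) h2
        simp only [smul_smul] at this
        rw [inv_mul_cancel₀ hax, one_smul] at this
        rw [div_eq_inv_mul]; exact this
      exact hne (h.prop_eq hbP haP hb).symm
  obtain ⟨v, hv⟩ := dw_exists_generic S hS0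
  have hvR : ∀ η ∈ Rplus, ⟪η, v⟫ ≠ 0 := fun η hη =>
    hv η (Finset.mem_union_left _ hη)
  -- the one-variable polynomial realizing dwP along the line x + t v
  set q : Polynomial ℝ :=
    ∑ α ∈ Rplus, ∑ ξ ∈ Rplus.erase α,
      Polynomial.C ⟪α, ξ⟫ * ∏ μ ∈ (Rplus.erase α).erase ξ,
        (Polynomial.C ⟪μ, x⟫ + Polynomial.C ⟪μ, v⟫ * Polynomial.X) with hq
  have heval : ∀ t : ℝ, q.eval t = dwP Rplus (x + t • v) := by
    intro t
    rw [hq]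
    unfold dwP
    rw [Polynomial.eval_finset_sum]
    refine Finset.sum_congr rfl fun α hα => ?_
    rw [Polynomial.eval_finset_sum]
    refine Finset.sum_congr rfl fun ξ hξ => ?_
    rw [Polynomial.eval_mul, Polynomial.eval_C, Polynomial.eval_prod]
    congr 1
    refine Finset.prod_congr rfl fun μ hμ => ?_
    rw [Polynomial.eval_add, Polynomial.eval_mul, Polynomial.eval_C, Polynomial.eval_C,
      Polynomial.eval_X, inner_add_right, real_inner_smul_right]
    ring
  have hdeg : q.natDegree ≤ Rplus.card - 2 := by
    refine Polynomial.natDegree_sum_le_of_forall_le _ _ fun α hα => ?_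
    refine Polynomial.natDegree_sum_le_of_forall_le _ _ fun ξ hξ => ?_
    refine le_trans (Polynomial.natDegree_C_mul_le _ _) ?_
    refine le_trans (Polynomial.natDegree_prod_le _ _) ?_
    have hbound : ∀ μ ∈ (Rplus.erase α).erase ξ,
        (Polynomial.C ⟪μ, x⟫ + Polynomial.C ⟪μ, v⟫ * Polynomial.X).natDegree ≤ 1 := by
      intro μ hμ
      refine le_trans (Polynomial.natDegree_add_le _ _) (max_le ?_ ?_)
      · exact le_trans (Polynomial.natDegree_C _).le (by norm_num)
      · exact le_trans (Polynomial.natDegree_C_mul_le _ _) Polynomial.natDegree_X_le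
    refine le_trans (Finset.sum_le_card_nsmul _ _ 1 hbound) ?_
    simp only [smul_eq_mul, mul_one]
    rw [Finset.card_erase_of_mem hξ, Finset.card_erase_of_mem hα]
    omega
  -- the candidate roots
  set tv : EuclideanSpace ℝ (Fin N) → ℝ := fun η => -⟪η, x⟫ / ⟪η, v⟫ with htv
  have htinj : Set.InjOn tv Rplus := by
    intro a haP b hbP hab
    by_contra hne
    have hkey : ⟪⟪a, x⟫ • b - ⟪b, x⟫ • a, v⟫ ≠ 0 := by
      apply hv
      refine Finset.mem_union_right _ (Finset.mem_image.mpr ⟨(a, b), ?_, rfl⟩)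
      exact Finset.mem_filter.mpr ⟨Finset.mem_product.mpr ⟨haP, hbP⟩, hne⟩
    apply hkey
    rw [inner_sub_left, real_inner_smul_left, real_inner_smul_left]
    have hav : ⟪a, v⟫ ≠ 0 := hvR a haP
    have hbv : ⟪b, v⟫ ≠ 0 := hvR b hbP
    rw [htv] at hab
    simp only [div_eq_div_iff hav hbv] at hab
    linarith
  have hroots : ∀ η ∈ Rplus, q.eval (tv η) = 0 := by
    intro η hη
    rw [heval]
    apply h.dwP_hyperplane hη
    rw [inner_add_right, real_inner_smul_right]
    simp only [htv]
    rw [div_mul_cancel₀ _ (hvR η hη)]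
    ring
  have hqzero : q = 0 := by
    apply Polynomial.eq_zero_of_natDegree_lt_card_of_eval_eq_zero' q (Rplus.image tv)
    · intro i hi
      obtain ⟨η, hη, rfl⟩ := Finset.mem_image.mp hi
      exact hroots η hη
    · rw [Finset.card_image_of_injOn htinj]
      omega
  have := heval 0
  rw [hqzero] at this
  simpa using this.symm


lemma cross_sum_zero (x : EuclideanSpace ℝ (Fin N)) (hx : ∀ α ∈ R, ⟪α, x⟫ ≠ 0) :
    ∑ α ∈ Rplus, ∑ ξ ∈ Rplus.erase α, ⟪α, ξ⟫ / (⟪α, x⟫ * ⟪ξ, x⟫) = 0 := by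
  have hprod : ∏ μ ∈ Rplus, ⟪μ, x⟫ ≠ 0 :=
    Finset.prod_ne_zero_iff.mpr fun μ hμ => hx μ (h.subset hμ)
  have hP := h.dwP_eq_zero x hx
  have key : (∑ α ∈ Rplus, ∑ ξ ∈ Rplus.erase α, ⟪α, ξ⟫ / (⟪α, x⟫ * ⟪ξ, x⟫)) *
      ∏ μ ∈ Rplus, ⟪μ, x⟫ = dwP Rplus x := by
    unfold dwP
    rw [Finset.sum_mul]
    refine Finset.sum_congr rfl fun α hα => ?_
    rw [Finset.sum_mul]
    refine Finset.sum_congr rfl fun ξ hξ => ?_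
    have hfac : ∏ μ ∈ Rplus, ⟪μ, x⟫
        = ⟪α, x⟫ * (⟪ξ, x⟫ * ∏ μ ∈ (Rplus.erase α).erase ξ, ⟪μ, x⟫) := by
      rw [← Finset.mul_prod_erase Rplus _ hα, ← Finset.mul_prod_erase (Rplus.erase α) _ hξ]
    have hαx : ⟪α, x⟫ ≠ 0 := hx α (h.subset hα)
    have hξx : ⟪ξ, x⟫ ≠ 0 := hx ξ (h.subset (Finset.mem_of_mem_erase hξ))
    rw [hfac, div_mul_eq_mul_div, mul_div_assoc]
    congr 1
    rw [show ⟪α, x⟫ * (⟪ξ, x⟫ * ∏ μ ∈ (Rplus.erase α).erase ξ, ⟪μ, x⟫)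
        = (⟪α, x⟫ * ⟪ξ, x⟫) * ∏ μ ∈ (Rplus.erase α).erase ξ, ⟪μ, x⟫ from by ring,
      mul_div_cancel_left₀ _ (mul_ne_zero hαx hξx)]
  rcases mul_eq_zero.mp (key.trans hP) with h0 | h0
  · exact h0
  · exact absurd h0 hprod

end DWSetup


section Analysis

variable {N : ℕ}

lemma dw_sign_scalar {t β : ℝ} (ht : t ≠ 0) :
    (SignType.sign t : ℝ) * β * |t| ^ (β - 1) = β * |t| ^ β / t := by
  rcases ht.lt_or_gt with hlt | hgt
  · rw [abs_of_neg hlt, sign_neg hlt, Real.rpow_sub (by linarith), Real.rpow_one]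
    push_cast
    field_simp
    simp
  · rw [abs_of_pos hgt, sign_pos hgt, Real.rpow_sub hgt, Real.rpow_one]
    push_cast
    field_simp
    simp

lemma dw_hasFDerivAt_factor (α : EuclideanSpace ℝ (Fin N)) {y : EuclideanSpace ℝ (Fin N)}
    (hy : ⟪α, y⟫ ≠ 0) (β : ℝ) :
    HasFDerivAt (fun z => |⟪α, z⟫| ^ β)
      ((β * |⟪α, y⟫| ^ β / ⟪α, y⟫) • innerSL ℝ α) y := by
  have habs : HasDerivAt (fun t : ℝ => |t|) (SignType.sign (⟪α, y⟫) : ℝ) ⟪α, y⟫ :=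
    hasDerivAt_abs hy
  have hpow : HasDerivAt (fun t : ℝ => |t| ^ β)
      ((SignType.sign (⟪α, y⟫) : ℝ) * β * |⟪α, y⟫| ^ (β - 1)) ⟪α, y⟫ :=
    habs.rpow_const (Or.inl (abs_ne_zero.mpr hy))
  have hlin : HasFDerivAt (fun z : EuclideanSpace ℝ (Fin N) => ⟪α, z⟫)
      (innerSL ℝ α) y := (innerSL ℝ α).hasFDerivAt
  have hcomp := hpow.comp_hasFDerivAt y hlin
  rw [dw_sign_scalar hy] at hcomp
  exact hcomp

lemma dw_hasFDerivAt_w {Rplus : Finset (EuclideanSpace ℝ (Fin N))} {β : ℝ}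
    {w : EuclideanSpace ℝ (Fin N) → ℝ}
    (hw : ∀ x, w x = ∏ α ∈ Rplus, |⟪α, x⟫| ^ β)
    {y : EuclideanSpace ℝ (Fin N)} (hy : ∀ α ∈ Rplus, ⟪α, y⟫ ≠ 0) :
    HasFDerivAt w (∑ α ∈ Rplus, ((w y) * β / ⟪α, y⟫) • innerSL ℝ α) y := by
  classical
  have h1 : HasFDerivAt (fun z => ∏ α ∈ Rplus, |⟪α, z⟫| ^ β)
      (∑ α ∈ Rplus, (∏ ξ ∈ Rplus.erase α, |⟪ξ, y⟫| ^ β) •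
        ((β * |⟪α, y⟫| ^ β / ⟪α, y⟫) • innerSL ℝ α)) y :=
    HasFDerivAt.finset_prod fun α hα => dw_hasFDerivAt_factor α (hy α hα) β
  have hD : (∑ α ∈ Rplus, ((w y) * β / ⟪α, y⟫) • innerSL ℝ α)
      = ∑ α ∈ Rplus, (∏ ξ ∈ Rplus.erase α, |⟪ξ, y⟫| ^ β) •
        ((β * |⟪α, y⟫| ^ β / ⟪α, y⟫) • innerSL ℝ α) := by
    refine Finset.sum_congr rfl fun α hα => ?_
    rw [smul_smul]
    congr 1
    rw [hw y, ← Finset.mul_prod_erase Rplus _ hα]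
    ring
  rw [hD]
  have hwfun : w = fun z => ∏ α ∈ Rplus, |⟪α, z⟫| ^ β := funext hw
  rw [hwfun]
  exact h1

end Analysis

end DunklAux

/-- Laplacian identity for the Dunkl weight with all multiplicities one:
`Δ w_β(x) = β(β−1) w_β(x) ∑_{α∈R₊} ‖α‖²/(α·x)²` away from the reflecting hyperplanes. -/
theorem dunkl_weight_laplacian
    (N : ℕ) (R Rplus : Finset (EuclideanSpace ℝ (Fin N)))
    (m : EuclideanSpace ℝ (Fin N))
    (hR0 : (0 : EuclideanSpace ℝ (Fin N)) ∉ R)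
    (hRinv : ∀ α ∈ R, ∀ ξ ∈ R, (ξ - (2 * ⟪α, ξ⟫ / ‖α‖ ^ 2) • α) ∈ R)
    (hRred : ∀ α ∈ R, ∀ c : ℝ, c • α ∈ R → c = 1 ∨ c = -1)
    (hm : ∀ α ∈ R, ⟪m, α⟫ ≠ 0)
    (hRplus : Rplus = R.filter (fun α => 0 < ⟪m, α⟫))
    (β : ℝ) (hβ : 0 < β)
    (w : EuclideanSpace ℝ (Fin N) → ℝ)
    (hw : ∀ x, w x = ∏ α ∈ Rplus, |⟪α, x⟫| ^ β)
    (x : EuclideanSpace ℝ (Fin N))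
    (hx : ∀ α ∈ R, ⟪α, x⟫ ≠ 0) :
    ∑ i : Fin N,
        fderiv ℝ (fun y => fderiv ℝ w y (EuclideanSpace.single i 1)) x
          (EuclideanSpace.single i 1)
      = β * (β - 1) * w x * ∑ α ∈ Rplus, ‖α‖ ^ 2 / ⟪α, x⟫ ^ 2 := by
  classical
  have h : DWSetup N R Rplus m := ⟨hR0, hRinv, hRred, hm, hRplus⟩
  set e : Fin N → EuclideanSpace ℝ (Fin N) := fun i => EuclideanSpace.single i 1 with he
  set U : Set (EuclideanSpace ℝ (Fin N)) := {y | ∀ α ∈ Rplus, ⟪α, y⟫ ≠ 0} with hU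
  have hUopen : IsOpen U := by
    have hUeq : U = ⋂ α ∈ (Rplus : Set (EuclideanSpace ℝ (Fin N))), {y | ⟪α, y⟫ ≠ 0} := by
      ext y
      simp [hU, Set.mem_iInter]
    rw [hUeq]
    refine Set.Finite.isOpen_biInter Rplus.finite_toSet fun α hα => ?_
    exact isOpen_compl_singleton.preimage (innerSL ℝ α).continuous
  have hxU : x ∈ U := fun α hα => hx α (h.subset hα)
  have hUnhds : U ∈ nhds x := hUopen.mem_nhds hxU
  set D : EuclideanSpace ℝ (Fin N) → (EuclideanSpace ℝ (Fin N) →L[ℝ] ℝ) :=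
    fun y => ∑ α ∈ Rplus, ((w y) * β / ⟪α, y⟫) • innerSL ℝ α with hD
  have hwD : ∀ y ∈ U, HasFDerivAt w (D y) y := fun y hy => dw_hasFDerivAt_w hw hy
  have hsingle : ∀ (α : EuclideanSpace ℝ (Fin N)) (i : Fin N), ⟪α, e i⟫ = α i := by
    intro α i
    rw [he]
    simpa using EuclideanSpace.inner_single_right i (1 : ℝ) α
  set G : Fin N → EuclideanSpace ℝ (Fin N) → ℝ :=
    fun i y => β * ∑ α ∈ Rplus, (w y * (⟪α, y⟫)⁻¹) * α i with hG
  have hDapply : ∀ y, ∀ i : Fin N, D y (e i) = G i y := by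
    intro y i
    rw [hD, hG]
    simp only [ContinuousLinearMap.coe_sum', Finset.sum_apply, ContinuousLinearMap.coe_smul',
      Pi.smul_apply, innerSL_apply_apply, smul_eq_mul]
    rw [Finset.mul_sum]
    refine Finset.sum_congr rfl fun α hα => ?_
    rw [hsingle α i, div_eq_mul_inv]
    ring
  have hfd : ∀ i : Fin N, (fun y => fderiv ℝ w y (e i)) =ᶠ[nhds x] G i := by
    intro i
    filter_upwards [hUnhds] with y hy
    rw [(hwD y hy).fderiv, hDapply]
  set T : Fin N → (EuclideanSpace ℝ (Fin N) →L[ℝ] ℝ) := fun i =>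
    β • ∑ α ∈ Rplus, (α i) •
      ((w x) • ((-(⟪α, x⟫ ^ 2)⁻¹) • innerSL ℝ α) + (⟪α, x⟫)⁻¹ • D x) with hT
  have hGd : ∀ i : Fin N, HasFDerivAt (G i) (T i) x := by
    intro i
    rw [hG, hT]
    apply HasFDerivAt.const_mul
    apply HasFDerivAt.fun_sum
    intro α hα
    have hαx : ⟪α, x⟫ ≠ 0 := hx α (h.subset hα)
    have hinv : HasFDerivAt (fun y : EuclideanSpace ℝ (Fin N) => (⟪α, y⟫)⁻¹)
        ((-(⟪α, x⟫ ^ 2)⁻¹) • innerSL ℝ α) x :=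
      (hasDerivAt_inv hαx).comp_hasFDerivAt x ((innerSL ℝ α).hasFDerivAt)
    exact ((hwD x hxU).mul hinv).mul_const (α i)
  have hsecond : ∀ i : Fin N,
      fderiv ℝ (fun y => fderiv ℝ w y (e i)) x (e i) = T i (e i) := by
    intro i
    rw [(hfd i).fderiv_eq, (hGd i).fderiv]
  -- Evaluate T i (e i).
  have hTval : ∀ i : Fin N, T i (e i) = β * ∑ α ∈ Rplus,
      α i * (w x * (-(⟪α, x⟫ ^ 2)⁻¹ * α i)
        + (⟪α, x⟫)⁻¹ * (β * ∑ ν ∈ Rplus, (w x * (⟪ν, x⟫)⁻¹) * ν i)) := by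
    intro i
    rw [hT]
    simp only [ContinuousLinearMap.coe_smul', Pi.smul_apply, ContinuousLinearMap.coe_sum',
      Finset.sum_apply, ContinuousLinearMap.add_apply, innerSL_apply_apply, smul_eq_mul]
    congr 1
    refine Finset.sum_congr rfl fun α hα => ?_
    rw [hsingle α i, hDapply x i, hG]
  -- Algebraic identities.
  have hcross := h.cross_sum_zero x hx
  have hinner_sum : ∀ α ν : EuclideanSpace ℝ (Fin N), (∑ i : Fin N, α i * ν i) = ⟪α, ν⟫ := by
    intro α ν
    rw [PiLp.inner_apply]
    simp
    exact Finset.sum_congr rfl fun _ _ => mul_comm _ _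
  have hnorm : ∀ α : EuclideanSpace ℝ (Fin N), (∑ i : Fin N, α i * α i) = ‖α‖ ^ 2 := by
    intro α
    rw [hinner_sum, real_inner_self_eq_norm_sq]
  have hstep1 : ∀ α ∈ Rplus, ∀ i : Fin N,
      α i * (w x * (-(⟪α, x⟫ ^ 2)⁻¹ * α i)
          + (⟪α, x⟫)⁻¹ * (β * ∑ ν ∈ Rplus, (w x * (⟪ν, x⟫)⁻¹) * ν i))
      = -(w x) * (⟪α, x⟫ ^ 2)⁻¹ * (α i * α i)
        + β * w x * ∑ ν ∈ Rplus, ((⟪α, x⟫)⁻¹ * (⟪ν, x⟫)⁻¹) * (α i * ν i) := by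
    intro α hα i
    rw [mul_add]
    congr 1
    · ring
    · rw [show α i * ((⟪α, x⟫)⁻¹ * (β * ∑ ν ∈ Rplus, (w x * (⟪ν, x⟫)⁻¹) * ν i))
          = (α i * (⟪α, x⟫)⁻¹ * β) * ∑ ν ∈ Rplus, (w x * (⟪ν, x⟫)⁻¹) * ν i from by ring,
        Finset.mul_sum, Finset.mul_sum]
      refine Finset.sum_congr rfl fun ν hν => ?_
      ring
  have hstep2 : ∑ i : Fin N, T i (e i)
      = β * ∑ α ∈ Rplus, (-(w x) * (⟪α, x⟫ ^ 2)⁻¹ * ‖α‖ ^ 2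
          + β * w x * ∑ ν ∈ Rplus, ((⟪α, x⟫)⁻¹ * (⟪ν, x⟫)⁻¹) * ⟪α, ν⟫) := by
    rw [Finset.sum_congr rfl fun i (_ : i ∈ Finset.univ) => hTval i, ← Finset.mul_sum]
    congr 1
    rw [Finset.sum_comm]
    refine Finset.sum_congr rfl fun α hα => ?_
    rw [Finset.sum_congr rfl fun i (_ : i ∈ Finset.univ) => hstep1 α hα i,
      Finset.sum_add_distrib, ← Finset.mul_sum, hnorm α]
    congr 1
    rw [← Finset.mul_sum]
    congr 1
    rw [Finset.sum_comm]
    refine Finset.sum_congr rfl fun ν hν => ?_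
    rw [← Finset.mul_sum, hinner_sum α ν]
  have hdiag : ∑ α ∈ Rplus, ∑ ν ∈ Rplus, ((⟪α, x⟫)⁻¹ * (⟪ν, x⟫)⁻¹) * ⟪α, ν⟫
      = ∑ α ∈ Rplus, ‖α‖ ^ 2 / ⟪α, x⟫ ^ 2 := by
    have hsplit : ∀ α ∈ Rplus, ∑ ν ∈ Rplus, ((⟪α, x⟫)⁻¹ * (⟪ν, x⟫)⁻¹) * ⟪α, ν⟫
        = ‖α‖ ^ 2 / ⟪α, x⟫ ^ 2 + ∑ ν ∈ Rplus.erase α, ⟪α, ν⟫ / (⟪α, x⟫ * ⟪ν, x⟫) := by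
      intro α hα
      rw [← Finset.add_sum_erase _ _ hα]
      congr 1
      · rw [real_inner_self_eq_norm_sq]
        ring
      · refine Finset.sum_congr rfl fun ν hν => ?_
        rw [div_eq_mul_inv, mul_inv]
        ring
    rw [Finset.sum_congr rfl hsplit, Finset.sum_add_distrib, hcross, add_zero]
  calc ∑ i : Fin N, fderiv ℝ (fun y => fderiv ℝ w y (EuclideanSpace.single i 1)) x
        (EuclideanSpace.single i 1)
      = ∑ i : Fin N, T i (e i) := Finset.sum_congr rfl fun i _ => hsecond i
    _ = β * ∑ α ∈ Rplus, (-(w x) * (⟪α, x⟫ ^ 2)⁻¹ * ‖α‖ ^ 2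
          + β * w x * ∑ ν ∈ Rplus, ((⟪α, x⟫)⁻¹ * (⟪ν, x⟫)⁻¹) * ⟪α, ν⟫) := hstep2
    _ = β * ((-(w x)) * (∑ α ∈ Rplus, ‖α‖ ^ 2 / ⟪α, x⟫ ^ 2)
          + β * w x * ∑ α ∈ Rplus, ∑ ν ∈ Rplus, ((⟪α, x⟫)⁻¹ * (⟪ν, x⟫)⁻¹) * ⟪α, ν⟫) := by
        have h1 : ∑ α ∈ Rplus, -(w x) * (⟪α, x⟫ ^ 2)⁻¹ * ‖α‖ ^ 2
            = -(w x) * ∑ α ∈ Rplus, ‖α‖ ^ 2 / ⟪α, x⟫ ^ 2 := by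
          rw [Finset.mul_sum]
          refine Finset.sum_congr rfl fun α hα => ?_
          rw [div_eq_mul_inv]
          ring
        rw [Finset.sum_add_distrib, h1, ← Finset.mul_sum]
    _ = β * ((-(w x)) * (∑ α ∈ Rplus, ‖α‖ ^ 2 / ⟪α, x⟫ ^ 2)
          + β * w x * ∑ α ∈ Rplus, ‖α‖ ^ 2 / ⟪α, x⟫ ^ 2) := by rw [hdiag]
    _ = β * (β - 1) * w x * ∑ α ∈ Rplus, ‖α‖ ^ 2 / ⟪α, x⟫ ^ 2 := by ring
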